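/- The upper domination number of X_n is 2, where X_n is the graph on vertices {u_0,...,u_n} ∪ {v_0,...,v_n} with edges u_iu_j (i ≠ j), v_iv_j (i ≠ j), and u_iv_i for i ≠ 0. -/

import Mathlib

open SimpleGraph

variable {V : Type*} {W : Type*}

/-- `D` is a dominating set of `G`: every vertex outside `D` has a neighbor in `D`. -/
def IsDomSet (G : SimpleGraph V) (D : Set V) : Prop :=
  ∀ v ∉ D, ∃ u ∈ D, G.Adj u v

/-- `D` is a minimal dominating set: dominating, and no proper subset is dominating. -/
def IsMinDomSet (G : SimpleGraph V) (D : Set V) : Prop :=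
  IsDomSet G D ∧ ∀ D' ⊂ D, ¬ IsDomSet G D'

/-- The upper domination number `Γ(G)`: maximum size of a minimal dominating set. -/
noncomputable def upperDom (G : SimpleGraph V) : ℕ :=
  sSup {n | ∃ D : Set V, IsMinDomSet G D ∧ D.ncard = n}

/-- The domination number `γ(G)`: minimum size of a dominating set. -/
noncomputable def domNum (G : SimpleGraph V) : ℕ :=
  sInf {n | ∃ D : Set V, IsDomSet G D ∧ D.ncard = n}

/-- The set of vertices of `D` having a private `D`-neighbor. -/
def privSet (G : SimpleGraph V) (D : Set V) : Set V :=
  {v ∈ D | ∃ u, u ∉ D ∧ G.Adj v u ∧ ∀ w ∈ D, G.Adj w u → w = v}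

/-- `I` is an independent set of `G`. -/
def IsIndep (G : SimpleGraph V) (I : Set V) : Prop :=
  ∀ u ∈ I, ∀ v ∈ I, ¬ G.Adj u v

/-- `I` is a maximal independent set of `G`. -/
def IsMaxIndep (G : SimpleGraph V) (I : Set V) : Prop :=
  IsIndep G I ∧ ∀ J, IsIndep G J → I ⊆ J → J = I

/-- The independence number `α(G)`. -/
noncomputable def indepNum (G : SimpleGraph V) : ℕ :=
  sSup {n | ∃ I : Set V, IsIndep G I ∧ I.ncard = n}

/-- The star `K_{1,n}` on `Fin (n+1)` with center `0`. -/
def starGraph (n : ℕ) : SimpleGraph (Fin (n + 1)) :=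
  SimpleGraph.fromRel (fun i _ => i = 0)

/-- The graph `X_n`: two copies of `K_{n+1}` (on `u_0,…,u_n` and `v_0,…,v_n`)
joined by the matching edges `u_i v_i` for `i ≠ 0`. -/
def Xgraph (n : ℕ) : SimpleGraph (Fin (n + 1) ⊕ Fin (n + 1)) :=
  SimpleGraph.fromRel (fun x y => match x, y with
    | .inl _, .inl _ => True
    | .inr _, .inr _ => True
    | .inl i, .inr j => i = j ∧ i ≠ 0
    | _, _ => False)

/-- The graph `X_n'`: `X_n` with `u_0` deleted.  Vertices `inl i` represent
`u_{i+1}` (`i : Fin n`) and `inr j` represent `v_j` (`j : Fin (n+1)`); each side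
induces a complete graph and `u_{i+1}` is matched to `v_{i+1}`. -/
def Xgraph' (n : ℕ) : SimpleGraph (Fin n ⊕ Fin (n + 1)) :=
  SimpleGraph.fromRel (fun x y => match x, y with
    | .inl _, .inl _ => True
    | .inr _, .inr _ => True
    | .inl i, .inr j => (j : ℕ) = (i : ℕ) + 1
    | _, _ => False)

theorem stmt_6 (n : ℕ) : upperDom (Xgraph n) = 2 := by
  have hll : ∀ (i j : Fin (n+1)), (Xgraph n).Adj (Sum.inl i) (Sum.inl j) ↔ i ≠ j := by
    intro i j; simp [Xgraph, SimpleGraph.fromRel_adj]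
  have hrr : ∀ (i j : Fin (n+1)), (Xgraph n).Adj (Sum.inr i) (Sum.inr j) ↔ i ≠ j := by
    intro i j; simp [Xgraph, SimpleGraph.fromRel_adj]
  have hlr : ∀ (i j : Fin (n+1)), (Xgraph n).Adj (Sum.inl i) (Sum.inr j) ↔ (i = j ∧ i ≠ 0) := by
    intro i j; simp [Xgraph, SimpleGraph.fromRel_adj]
  -- the witness minimal dominating set {u₀, v₀}
  have hD2 : IsMinDomSet (Xgraph n) {Sum.inl 0, Sum.inr 0} := by
    constructor
    · rintro (i | j) hv
      · refine ⟨Sum.inl 0, by simp, (hll 0 i).2 ?_⟩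
        intro h; exact hv (by simp [h])
      · refine ⟨Sum.inr 0, by simp, (hrr 0 j).2 ?_⟩
        intro h; exact hv (by simp [h])
    · rintro D' ⟨hsub, hne⟩ hdom
      obtain ⟨x, hxD, hxD'⟩ : ∃ x ∈ ({Sum.inl 0, Sum.inr 0} : Set _), x ∉ D' := by
        by_contra h; push_neg at h
        exact hne h
      obtain ⟨y, hyD', hadj⟩ := hdom x hxD'
      have hyD := hsub hyD'
      rcases hxD with rfl | rfl <;> rcases hyD with rfl | rfl
      · exact (hll 0 0).1 hadj rfl
      · exact ((hlr 0 0).1 hadj.symm).2 rfl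
      · exact ((hlr 0 0).1 hadj).2 rfl
      · exact (hrr 0 0).1 hadj rfl
  have hcard : ({Sum.inl 0, Sum.inr 0} : Set (Fin (n+1) ⊕ Fin (n+1))).ncard = 2 := by
    rw [Set.ncard_pair (by simp)]
  -- every minimal dominating set has at most 2 elements
  have hbound : ∀ D : Set (Fin (n+1) ⊕ Fin (n+1)), IsMinDomSet (Xgraph n) D → D.ncard ≤ 2 := by
    rintro D ⟨hdom, hmin⟩
    -- D contains some inl
    obtain ⟨a, ha⟩ : ∃ a, Sum.inl a ∈ D := by
      by_cases h0 : Sum.inl 0 ∈ D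
      · exact ⟨0, h0⟩
      · obtain ⟨y, hyD, hadj⟩ := hdom _ h0
        rcases y with i | j
        · exact ⟨i, hyD⟩
        · exact absurd (((hlr 0 j).1 hadj.symm).2 rfl) (fun h => h)
    obtain ⟨c, hc⟩ : ∃ c, Sum.inr c ∈ D := by
      by_cases h0 : Sum.inr 0 ∈ D
      · exact ⟨0, h0⟩
      · obtain ⟨y, hyD, hadj⟩ := hdom _ h0
        rcases y with i | j
        · exact absurd (((hlr i 0).1 hadj).1 ▸ ((hlr i 0).1 hadj).2) (fun h => h rfl)
        · exact ⟨j, hyD⟩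
    -- uniqueness on each side
    have huniL : ∀ b, Sum.inl b ∈ D → b = a := by
      intro b hb
      by_contra hba
      have hsub : D \ {Sum.inl b} ⊂ D := Set.sdiff_singleton_ssubset.2 hb
      refine hmin _ hsub ?_
      rintro (i | j) hv
      · refine ⟨Sum.inl a, ⟨ha, ?_⟩, (hll a i).2 ?_⟩
        · simp only [Set.mem_singleton_iff]; intro h; exact hba (Sum.inl.inj h.symm)
        · rintro rfl; exact hv ⟨ha, by simp only [Set.mem_singleton_iff]; intro h; exact hba (Sum.inl.inj h.symm)⟩
      · refine ⟨Sum.inr c, ⟨hc, by simp⟩, (hrr c j).2 ?_⟩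
        rintro rfl; exact hv ⟨hc, by simp⟩
    have huniR : ∀ d, Sum.inr d ∈ D → d = c := by
      intro d hd
      by_contra hdc
      have hsub : D \ {Sum.inr d} ⊂ D := Set.sdiff_singleton_ssubset.2 hd
      refine hmin _ hsub ?_
      rintro (i | j) hv
      · refine ⟨Sum.inl a, ⟨ha, by simp⟩, (hll a i).2 ?_⟩
        rintro rfl; exact hv ⟨ha, by simp⟩
      · refine ⟨Sum.inr c, ⟨hc, ?_⟩, (hrr c j).2 ?_⟩
        · simp only [Set.mem_singleton_iff]; intro h; exact hdc (Sum.inr.inj h.symm)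
        · rintro rfl; exact hv ⟨hc, by simp only [Set.mem_singleton_iff]; intro h; exact hdc (Sum.inr.inj h.symm)⟩
    have hDsub : D ⊆ {Sum.inl a, Sum.inr c} := by
      rintro (i | j) h
      · simp [huniL i h]
      · simp [huniR j h]
    calc D.ncard ≤ ({Sum.inl a, Sum.inr c} : Set _).ncard :=
          Set.ncard_le_ncard hDsub (Set.toFinite _)
      _ ≤ 2 := le_of_le_of_eq (Set.ncard_insert_le _ _) (by simp) -- was: by simpa using Set.ncard_insert_le (Sum.inl a) ({Sum.inr c} : Set (Fin (n+1) ⊕ Fin (n+1)))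
  refine le_antisymm ?_ ?_
  · refine csSup_le ⟨2, ⟨_, hD2, hcard⟩⟩ ?_
    rintro m ⟨D, hDmin, rfl⟩
    exact hbound D hDmin
  · apply le_csSup
    · refine ⟨2, ?_⟩
      rintro m ⟨D, hDmin, rfl⟩
      exact hbound D hDmin
    · exact ⟨_, hD2, hcard⟩
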